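/- With F, r, N, Γ = F/[F,N] as above, the quotient map Γ → F/N together with the inclusion of the subgroup generated by [r] yields a central extension 1 → ⟨[r]⟩ → Γ → F/N → 1; that is, the kernel of the natural surjection Γ → F/N equals N/[F,N], this kernel is contained in the center of Γ, and it is generated by the class of r. -/

import Mathlib

open scoped commutatorElement

theorem stmt1_aux {F : Type*} [Group F] (r : F)
    (p : (F ⧸ ⁅(⊤ : Subgroup F), Subgroup.normalClosure {r}⁆) →*
          (F ⧸ Subgroup.normalClosure {r}))
    (hp : p = QuotientGroup.map
        ⁅(⊤ : Subgroup F), Subgroup.normalClosure {r}⁆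
        (Subgroup.normalClosure {r}) (MonoidHom.id _)
        (le_trans (Subgroup.commutator_le_right _ _) le_rfl)) :
    p.ker = (Subgroup.normalClosure {r}).map
        (QuotientGroup.mk' ⁅(⊤ : Subgroup F), Subgroup.normalClosure {r}⁆)
    ∧ p.ker ≤ Subgroup.center _
    ∧ p.ker = Subgroup.zpowers (QuotientGroup.mk r) := by
  set N : Subgroup F := Subgroup.normalClosure {r} with hN
  set K : Subgroup F := ⁅(⊤ : Subgroup F), N⁆ with hK
  have hKle : K ≤ N := le_trans (Subgroup.commutator_le_right _ _) le_rfl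
  have hpmk : ∀ x : F, p ((QuotientGroup.mk' K) x) = QuotientGroup.mk x := by
    intro x
    rw [hp]
    exact QuotientGroup.map_mk' K N (MonoidHom.id F) hKle x
  have h1 : p.ker = N.map (QuotientGroup.mk' K) := by
    ext y
    constructor
    · intro hy
      obtain ⟨x, rfl⟩ := QuotientGroup.mk'_surjective K y
      rw [MonoidHom.mem_ker, hpmk x] at hy
      exact ⟨x, (QuotientGroup.eq_one_iff x).mp hy, rfl⟩
    · rintro ⟨x, hx, rfl⟩
      rw [MonoidHom.mem_ker, hpmk x]
      exact (QuotientGroup.eq_one_iff x).mpr hx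
  have hcen : ∀ x : F, x ∈ N → (QuotientGroup.mk x : F ⧸ K) ∈ Subgroup.center (F ⧸ K) := by
    intro x hx
    rw [Subgroup.mem_center_iff]
    intro g
    obtain ⟨y, rfl⟩ := QuotientGroup.mk'_surjective K g
    show QuotientGroup.mk (y * x) = QuotientGroup.mk (x * y)
    rw [QuotientGroup.eq]
    have heq : (y * x)⁻¹ * (x * y) = ⁅x⁻¹, y⁻¹⁆ := by group
    rw [heq, hK, Subgroup.commutator_comm]
    exact Subgroup.commutator_mem_commutator (Subgroup.inv_mem _ hx) (Subgroup.mem_top _)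
  have h2 : p.ker ≤ Subgroup.center (F ⧸ K) := by
    rw [h1]
    rintro y ⟨x, hx, rfl⟩
    exact hcen x hx
  have hrN : r ∈ N := Subgroup.subset_normalClosure rfl
  have hzle : Subgroup.zpowers (QuotientGroup.mk r : F ⧸ K) ≤ Subgroup.center (F ⧸ K) :=
    (Subgroup.zpowers_le).mpr (hcen r hrN)
  haveI hznorm : (Subgroup.zpowers (QuotientGroup.mk r : F ⧸ K)).Normal := by
    constructor
    intro n hn g
    have hc := Subgroup.mem_center_iff.mp (hzle hn) g
    rw [hc, mul_assoc, mul_inv_cancel, mul_one]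
    exact hn
  have h3 : p.ker = Subgroup.zpowers (QuotientGroup.mk r : F ⧸ K) := by
    apply le_antisymm
    · rw [h1, Subgroup.map_le_iff_le_comap]
      apply Subgroup.normalClosure_le_normal
      intro x hx
      rw [Set.mem_singleton_iff] at hx
      subst hx
      exact Subgroup.mem_comap.mpr (Subgroup.mem_zpowers _)
    · rw [Subgroup.zpowers_le, MonoidHom.mem_ker]
      show p ((QuotientGroup.mk' K) r) = 1
      rw [hpmk r]
      exact (QuotientGroup.eq_one_iff r).mpr hrN
  exact ⟨h1, h2, h3⟩

/-- With `F` the free group on `x₁,y₁,…,x_ℓ,y_ℓ`, `r = [x₁,y₁]⋯[x_ℓ,y_ℓ]`,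
`N` the normal closure of `r`, and `Γ = F/[F,N]`, the natural surjection
`Γ → F/N` has kernel `N/[F,N]`, this kernel is central in `Γ`, and it is
generated by the class of `r`; thus `1 → ⟨[r]⟩ → Γ → F/N → 1` is a central
extension. -/
theorem stmt1 (ℓ : ℕ) (hℓ : 1 ≤ ℓ)
    (r : FreeGroup (Fin ℓ × Bool))
    (hr : r = ((List.finRange ℓ).map fun i =>
      ⁅FreeGroup.of (i, false), FreeGroup.of (i, true)⁆).prod)
    (p : (FreeGroup (Fin ℓ × Bool) ⧸
            ⁅(⊤ : Subgroup (FreeGroup (Fin ℓ × Bool))), Subgroup.normalClosure {r}⁆) →*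
          (FreeGroup (Fin ℓ × Bool) ⧸ Subgroup.normalClosure {r}))
    (hp : p = QuotientGroup.map
        ⁅(⊤ : Subgroup (FreeGroup (Fin ℓ × Bool))), Subgroup.normalClosure {r}⁆
        (Subgroup.normalClosure {r}) (MonoidHom.id _)
        (le_trans (Subgroup.commutator_le_right _ _) le_rfl)) :
    p.ker = (Subgroup.normalClosure {r}).map
        (QuotientGroup.mk' ⁅(⊤ : Subgroup (FreeGroup (Fin ℓ × Bool))),
          Subgroup.normalClosure {r}⁆)
    ∧ p.ker ≤ Subgroup.center _
    ∧ p.ker = Subgroup.zpowers (QuotientGroup.mk r) := by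
  exact stmt1_aux r p hp
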